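/- Fix ε > 0 and b ≥ 2, and set m_n = √(log b)·n − (3/(4√(log b)))·log n. Then the truncated second-order sum E[ Σ_{v ∈ T_n} (√(log b)·n − h_v/√2)²·exp(−4√(log b)·(√(log b)·n − h_v/√2))·1{h_v/√2 ≤ m_n + y} ] tends to 0 as n → ∞, for every fixed y > 0. -/

import Mathlib

open MeasureTheory ProbabilityTheory Real
open scoped NNReal ENNReal

section Aux

lemma gauss_pdf_exp (t x : ℝ) :
    gaussianPDFReal 0 1 x * Real.exp (t * x)
      = Real.exp (t ^ 2 / 2) * gaussianPDFReal t 1 x := by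
  simp only [gaussianPDFReal, NNReal.coe_one, mul_one, sub_zero]
  rw [mul_assoc, ← Real.exp_add, mul_comm (Real.exp _), mul_assoc, ← Real.exp_add]
  congr 2
  ring

lemma gauss_smul_eq (t x : ℝ) :
    ((gaussianPDFReal 0 1 x).toNNReal : ℝ≥0) • Real.exp (t * x)
      = Real.exp (t ^ 2 / 2) * gaussianPDFReal t 1 x := by
  rw [NNReal.smul_def, Real.coe_toNNReal _ (gaussianPDFReal_nonneg 0 1 x), smul_eq_mul,
    gauss_pdf_exp]

lemma gauss_density :
    gaussianReal 0 1
      = (MeasureTheory.volume : Measure ℝ).withDensity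
          (fun x => ((gaussianPDFReal 0 1 x).toNNReal : ℝ≥0∞)) := by
  rw [gaussianReal_of_var_ne_zero 0 one_ne_zero]
  rfl

lemma gauss_exp_integral (t : ℝ) :
    ∫ x, Real.exp (t * x) ∂(gaussianReal 0 1) = Real.exp (t ^ 2 / 2) := by
  rw [gauss_density,
    integral_withDensity_eq_integral_smul (measurable_gaussianPDFReal 0 1).real_toNNReal]
  calc ∫ x, ((gaussianPDFReal 0 1 x).toNNReal : ℝ≥0) • Real.exp (t * x)
      = ∫ x, Real.exp (t ^ 2 / 2) * gaussianPDFReal t 1 x := by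
        simp_rw [gauss_smul_eq]
    _ = Real.exp (t ^ 2 / 2) := by
        rw [MeasureTheory.integral_const_mul, integral_gaussianPDFReal_eq_one t one_ne_zero,
          mul_one]

lemma gauss_exp_integrable (t : ℝ) :
    Integrable (fun x => Real.exp (t * x)) (gaussianReal 0 1) := by
  rw [gauss_density,
    integrable_withDensity_iff_integrable_smul (measurable_gaussianPDFReal 0 1).real_toNNReal]
  have : (fun x => ((gaussianPDFReal 0 1 x).toNNReal : ℝ≥0) • Real.exp (t * x))
      = fun x => Real.exp (t ^ 2 / 2) * gaussianPDFReal t 1 x := by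
    funext x; exact gauss_smul_eq t x
  rw [this]
  exact (integrable_gaussianPDFReal t 1).const_mul _

lemma bound_aux {c a u : ℝ} (hc : 0 < c) (ha : 1 / c ≤ a) (hau : a ≤ u) :
    u ^ 2 * Real.exp (-4 * c * u)
      ≤ a ^ 2 * Real.exp (-(2 * c) * a) * Real.exp (-(2 * c) * u) := by
  have ha0 : 0 < a := lt_of_lt_of_le (by positivity) ha
  have hu0 : 0 ≤ u := le_trans ha0.le hau
  have hac : 1 ≤ a * c := by
    rw [div_le_iff₀ hc] at ha
    linarith
  have h1 : u ≤ a * Real.exp (c * (u - a)) := by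
    have h := Real.add_one_le_exp (c * (u - a))
    nlinarith [mul_le_mul_of_nonneg_left h ha0.le, mul_nonneg hc.le (sub_nonneg.mpr hau)]
  have h2 : u ^ 2 ≤ a ^ 2 * Real.exp (2 * c * (u - a)) := by
    have := pow_le_pow_left₀ hu0 h1 2
    calc u ^ 2 ≤ (a * Real.exp (c * (u - a))) ^ 2 := this
      _ = a ^ 2 * Real.exp (2 * c * (u - a)) := by
          rw [mul_pow, ← Real.exp_nat_mul]
          ring_nf
  calc u ^ 2 * Real.exp (-4 * c * u)
      ≤ a ^ 2 * Real.exp (2 * c * (u - a)) * Real.exp (-4 * c * u) :=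
        mul_le_mul_of_nonneg_right h2 (Real.exp_pos _).le
    _ = a ^ 2 * Real.exp (2 * c * (u - a) + -4 * c * u) := by
        rw [mul_assoc, ← Real.exp_add]
    _ = a ^ 2 * (Real.exp (-(2 * c) * a) * Real.exp (-(2 * c) * u)) := by
        rw [← Real.exp_add]; congr 1; ring
    _ = a ^ 2 * Real.exp (-(2 * c) * a) * Real.exp (-(2 * c) * u) := by ring

end Aux

/-- The branching random walk on the rooted `b`-ary tree: a vertex is a list of labels in
`Fin b` (the root is `[]`), an edge is identified with its lower endpoint (a nonempty list),
and `brw Y v ω` is the sum of the edge variables along the path from the root to `v`. -/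
noncomputable def brw {Ω : Type*} {b : ℕ} (Y : List (Fin b) → Ω → ℝ)
    (v : List (Fin b)) (ω : Ω) : ℝ :=
  ∑ i ∈ Finset.range v.length, Y (v.take (i + 1)) ω

section BrwExp

variable {Ω : Type*} [MeasurableSpace Ω] (μ : Measure Ω) [IsProbabilityMeasure μ]
  {b : ℕ} (Y : List (Fin b) → Ω → ℝ)

lemma brw_exp (hmeas : ∀ e, Measurable (Y e))
    (hindep : iIndepFun Y μ)
    (hgauss : ∀ e, μ.map (Y e) = gaussianReal 0 1)
    (t : ℝ) (v : List (Fin b)) :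
    Integrable (fun ω => Real.exp (t * brw Y v ω)) μ ∧
      ∫ ω, Real.exp (t * brw Y v ω) ∂μ = Real.exp (t ^ 2 / 2) ^ v.length := by
  classical
  set s : Finset (List (Fin b)) :=
    (Finset.range v.length).image (fun i => v.take (i + 1)) with hs
  have hinj : Set.InjOn (fun i => v.take (i + 1)) (Finset.range v.length) := by
    intro i hi j hj h
    simp only [Finset.coe_range, Set.mem_Iio] at hi hj
    have := congrArg List.length h
    simp only [List.length_take] at this
    omega
  have hkey : ∀ ω, brw Y v ω = (∑ e ∈ s, Y e) ω := by
    intro ω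
    rw [Finset.sum_apply, hs, Finset.sum_image (fun i hi j hj h => hinj hi hj h)]
    rfl
  have hint_e : ∀ e : List (Fin b), Integrable (fun ω => Real.exp (t * Y e ω)) μ := by
    intro e
    have h1 : Integrable (fun x => Real.exp (t * x)) (μ.map (Y e)) := by
      rw [hgauss e]; exact gauss_exp_integrable t
    have hg : Measurable fun x : ℝ => Real.exp (t * x) :=
      Real.measurable_exp.comp (measurable_const.mul measurable_id)
    rw [integrable_map_measure hg.aestronglyMeasurable (hmeas e).aemeasurable] at h1
    exact h1
  have hint : Integrable (fun ω => Real.exp (t * (∑ e ∈ s, Y e) ω)) μ :=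
    ProbabilityTheory.iIndepFun.integrable_exp_mul_sum hindep hmeas (fun e _ => hint_e e)
  constructor
  · refine hint.congr (Filter.Eventually.of_forall fun ω => ?_)
    simp only [hkey]
  · have hmgf : mgf (∑ e ∈ s, Y e) μ t = ∏ e ∈ s, mgf (Y e) μ t :=
      ProbabilityTheory.iIndepFun.mgf_sum hindep hmeas s
    have hmgf_e : ∀ e : List (Fin b), mgf (Y e) μ t = Real.exp (t ^ 2 / 2) := by
      intro e
      have hme : mgf (Y e) μ t = ∫ x, Real.exp (t * x) ∂(μ.map (Y e)) :=
        (integral_map (hmeas e).aemeasurable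
          (Real.measurable_exp.comp (measurable_const.mul measurable_id) :
            Measurable fun x : ℝ => Real.exp (t * x)).aestronglyMeasurable).symm
      rw [hme, hgauss e, gauss_exp_integral]
    have hcard : s.card = v.length := by
      rw [hs, Finset.card_image_of_injOn hinj, Finset.card_range]
    calc ∫ ω, Real.exp (t * brw Y v ω) ∂μ
        = mgf (∑ e ∈ s, Y e) μ t := by
          rw [mgf]
          exact integral_congr_ae (Filter.Eventually.of_forall fun ω => by simp only [hkey])
      _ = ∏ e ∈ s, mgf (Y e) μ t := hmgf
      _ = Real.exp (t ^ 2 / 2) ^ v.length := by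
          rw [Finset.prod_congr rfl (fun e _ => hmgf_e e), Finset.prod_const, hcard]

end BrwExp

/-- With `m_n = √(log b) n − (3/(4√(log b))) log n`, the truncated second-order sum
`E[∑_{v ∈ T_n} (√(log b) n − h_v/√2)² e^{−4√(log b)(√(log b) n − h_v/√2)} 1{h_v/√2 ≤ m_n + y}]`
tends to `0` as `n → ∞`, for every fixed `y > 0`. -/
theorem truncated_second_order_sum_tendsto_zero
    {Ω : Type*} [MeasurableSpace Ω] (μ : Measure Ω) [IsProbabilityMeasure μ]
    (b : ℕ) (hb : 2 ≤ b) (ε : ℝ) (hε : 0 < ε) (Y : List (Fin b) → Ω → ℝ)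
    (hmeas : ∀ e, Measurable (Y e))
    (hindep : iIndepFun Y μ)
    (hgauss : ∀ e, μ.map (Y e) = gaussianReal 0 1)
    (y : ℝ) (hy : 0 < y) :
    Filter.Tendsto (fun n : ℕ =>
        ∫ ω, ∑ v : List.Vector (Fin b) n,
          (Real.sqrt (Real.log b) * n - brw Y v.toList ω / Real.sqrt 2) ^ 2 *
            Real.exp (-4 * Real.sqrt (Real.log b) *
              (Real.sqrt (Real.log b) * n - brw Y v.toList ω / Real.sqrt 2)) *
            Set.indicator {ω' | brw Y v.toList ω' / Real.sqrt 2 ≤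
                Real.sqrt (Real.log b) * n
                  - 3 / (4 * Real.sqrt (Real.log b)) * Real.log n + y}
              (fun _ => (1 : ℝ)) ω ∂μ)
      Filter.atTop (nhds 0) := by
  have hb1 : (1 : ℝ) < b := by exact_mod_cast lt_of_lt_of_le one_lt_two hb
  have hb0 : (0 : ℝ) < b := lt_trans one_pos hb1
  have hlogb : (0 : ℝ) < Real.log b := Real.log_pos hb1
  set c : ℝ := Real.sqrt (Real.log b) with hcdef
  have hc : 0 < c := Real.sqrt_pos.mpr hlogb
  have hcc : c * c = Real.log b := Real.mul_self_sqrt hlogb.le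
  have hexpb : Real.exp (c * c) = b := by rw [hcc, Real.exp_log hb0]
  set t : ℝ := Real.sqrt 2 * c with htdef
  have ht2 : t ^ 2 / 2 = c * c := by
    rw [htdef, mul_pow, Real.sq_sqrt (by norm_num : (0:ℝ) ≤ 2)]
    ring
  set a : ℕ → ℝ := fun n => 3 / (4 * c) * Real.log n - y with hadef
  have ha_top : Filter.Tendsto a Filter.atTop Filter.atTop := by
    rw [hadef]
    simp only [sub_eq_add_neg]
    apply Filter.tendsto_atTop_add_const_right
    exact Filter.Tendsto.const_mul_atTop (by positivity)
      (Real.tendsto_log_atTop.comp tendsto_natCast_atTop_atTop)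
  set g : ℕ → ℝ := fun n => a n ^ 2 * Real.exp (-(2 * c) * a n) with hgdef
  have hg0 : Filter.Tendsto g Filter.atTop (nhds 0) := by
    have h2c : (0:ℝ) < 2 * c := by positivity
    have houter : Filter.Tendsto (fun x : ℝ => x ^ 2 * Real.exp (-(2 * c) * x))
        Filter.atTop (nhds 0) := by
      have h1 := tendsto_pow_mul_exp_neg_atTop_nhds_zero 2
      have h2 : Filter.Tendsto (fun x : ℝ => 2 * c * x) Filter.atTop Filter.atTop :=
        Filter.Tendsto.const_mul_atTop h2c Filter.tendsto_id
      have h3 := (h1.comp h2).const_mul ((1 / (2 * c)) ^ 2)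
      rw [mul_zero] at h3
      refine h3.congr fun x => ?_
      have : (2 * c) ≠ 0 := ne_of_gt h2c
      simp only [Function.comp_apply]
      field_simp
    exact houter.comp ha_top
  refine squeeze_zero' (Filter.Eventually.of_forall fun n => ?_) ?_ hg0
  · apply integral_nonneg
    intro ω
    apply Finset.sum_nonneg
    intro v _
    apply mul_nonneg (mul_nonneg (sq_nonneg _) (Real.exp_pos _).le)
    exact Set.indicator_nonneg (fun _ _ => zero_le_one) ω
  · filter_upwards [ha_top.eventually_ge_atTop (1 / c)] with n han
    have hs2 : Real.sqrt 2 * Real.sqrt 2 = 2 := Real.mul_self_sqrt (by norm_num)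
    have hs2' : Real.sqrt 2 ≠ 0 := by positivity
    have hexp : ∀ h : ℝ, Real.exp (-(2 * c) * (c * (n:ℝ) - h / Real.sqrt 2))
        = Real.exp (-(2 * (c * c)) * (n:ℝ)) * Real.exp (t * h) := by
      intro h
      rw [← Real.exp_add]
      congr 1
      rw [htdef]
      have hsq : Real.sqrt 2 ^ 2 = 2 := Real.sq_sqrt (by norm_num)
      field_simp
      linear_combination (-h) * hsq
    have hbound : ∀ ω, (∑ v : List.Vector (Fin b) n,
          (c * (n:ℝ) - brw Y v.toList ω / Real.sqrt 2) ^ 2 *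
            Real.exp (-4 * c * (c * (n:ℝ) - brw Y v.toList ω / Real.sqrt 2)) *
            Set.indicator {ω' | brw Y v.toList ω' / Real.sqrt 2 ≤
                c * (n:ℝ) - 3 / (4 * c) * Real.log n + y} (fun _ => (1 : ℝ)) ω)
        ≤ ∑ v : List.Vector (Fin b) n,
            (g n * Real.exp (-(2 * (c * c)) * (n:ℝ))) *
              Real.exp (t * brw Y v.toList ω) := by
      intro ω
      apply Finset.sum_le_sum
      intro v _
      by_cases hω : ω ∈ {ω' | brw Y v.toList ω' / Real.sqrt 2 ≤
          c * (n:ℝ) - 3 / (4 * c) * Real.log n + y}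
      · rw [Set.indicator_of_mem hω, mul_one]
        have hmem : brw Y v.toList ω / Real.sqrt 2 ≤
            c * (n:ℝ) - 3 / (4 * c) * Real.log n + y := hω
        have hau : a n ≤ c * (n:ℝ) - brw Y v.toList ω / Real.sqrt 2 := by
          rw [hadef]
          simp only
          linarith
        calc (c * (n:ℝ) - brw Y v.toList ω / Real.sqrt 2) ^ 2 *
              Real.exp (-4 * c * (c * (n:ℝ) - brw Y v.toList ω / Real.sqrt 2))
            ≤ a n ^ 2 * Real.exp (-(2 * c) * a n) *
                Real.exp (-(2 * c) * (c * (n:ℝ) - brw Y v.toList ω / Real.sqrt 2)) :=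
              bound_aux hc han hau
          _ = (g n * Real.exp (-(2 * (c * c)) * (n:ℝ))) *
                Real.exp (t * brw Y v.toList ω) := by
              rw [hgdef]
              simp only
              rw [hexp, ← mul_assoc]
      · rw [Set.indicator_of_notMem hω, mul_zero]
        positivity
    have hint : ∀ v : List.Vector (Fin b) n,
        Integrable (fun ω => Real.exp (t * brw Y v.toList ω)) μ :=
      fun v => (brw_exp μ Y hmeas hindep hgauss t v.toList).1
    have hGint : Integrable (fun ω => ∑ v : List.Vector (Fin b) n,
        (g n * Real.exp (-(2 * (c * c)) * (n:ℝ))) * Real.exp (t * brw Y v.toList ω)) μ :=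
      integrable_finset_sum _ (fun v _ => (hint v).const_mul _)
    calc (∫ ω, ∑ v : List.Vector (Fin b) n,
          (c * (n:ℝ) - brw Y v.toList ω / Real.sqrt 2) ^ 2 *
            Real.exp (-4 * c * (c * (n:ℝ) - brw Y v.toList ω / Real.sqrt 2)) *
            Set.indicator {ω' | brw Y v.toList ω' / Real.sqrt 2 ≤
                c * (n:ℝ) - 3 / (4 * c) * Real.log n + y} (fun _ => (1 : ℝ)) ω ∂μ)
        ≤ ∫ ω, ∑ v : List.Vector (Fin b) n,
            (g n * Real.exp (-(2 * (c * c)) * (n:ℝ))) *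
              Real.exp (t * brw Y v.toList ω) ∂μ := by
          refine integral_mono_of_nonneg (Filter.Eventually.of_forall fun ω => ?_) hGint
            (Filter.Eventually.of_forall hbound)
          apply Finset.sum_nonneg
          intro v _
          apply mul_nonneg (mul_nonneg (sq_nonneg _) (Real.exp_pos _).le)
          exact Set.indicator_nonneg (fun _ _ => zero_le_one) ω
      _ = ∑ v : List.Vector (Fin b) n, ∫ ω,
            (g n * Real.exp (-(2 * (c * c)) * (n:ℝ))) *
              Real.exp (t * brw Y v.toList ω) ∂μ :=
          integral_finset_sum _ (fun v _ => (hint v).const_mul _)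
      _ = ∑ v : List.Vector (Fin b) n,
            (g n * Real.exp (-(2 * (c * c)) * (n:ℝ))) * Real.exp (t ^ 2 / 2) ^ n := by
          refine Finset.sum_congr rfl fun v _ => ?_
          rw [MeasureTheory.integral_const_mul, (brw_exp μ Y hmeas hindep hgauss t v.toList).2,
            List.Vector.toList_length]
      _ = g n := by
          rw [Finset.sum_const, Finset.card_univ, card_vector, Fintype.card_fin,
            nsmul_eq_mul, ht2, hexpb]
          push_cast
          have hbn : ((b:ℝ)) ^ n = Real.exp (c * c * (n:ℝ)) := by
            rw [← hexpb, ← Real.exp_nat_mul]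
            ring_nf
          have hone : (b:ℝ) ^ n * Real.exp (-(2 * (c * c)) * (n:ℝ)) * (b:ℝ) ^ n = 1 := by
            rw [hbn, ← Real.exp_add, ← Real.exp_add,
              show c * c * (n:ℝ) + -(2 * (c * c)) * (n:ℝ) + c * c * (n:ℝ) = 0 by ring,
              Real.exp_zero]
          linear_combination (g n) * hone
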